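/- arXiv:2303.12850 — 3 statements merged into one kernel-verified Lean document; each statement's English description precedes it below -/
import Mathlib

section
/- Let G=(V,E) be a finite undirected graph with nonnegative vertex costs c : V → ℝ_{≥0}. The integrality gap of the LP relaxation min{Σ_{u∈V} c_u x_u : x ∈ P_WD(G)} of the pseudoforest deletion set problem is at most 3: for every x ∈ P_WD(G), there exists a pseudoforest deletion set U ⊆ V such that Σ_{u∈U} c(u) ≤ 3 · Σ_{u∈V} c(u) x_u. -/
/- Common definitions for the polyhedral study of FVS / PFDS. -/

open scoped Classical
open Finset

namespace FVS

noncomputable section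

variable {V : Type*}

/-- Degree of `u` in the subgraph of `G` induced on the vertex set `S`. -/
def degIn [Fintype V] (G : SimpleGraph V) (S : Finset V) (u : V) : ℕ :=
  (S.filter fun v => G.Adj u v).card

/-- Number of edges of `G` with both endpoints in `S`, i.e. `|E[S]|`. -/
def edgesIn [Fintype V] (G : SimpleGraph V) (S : Finset V) : ℕ :=
  (G.edgeFinset.filter fun e => ∀ v ∈ e, v ∈ S).card

/-- A finite graph is a pseudoforest if each connected component has at most as many
edges as vertices. -/
def IsPseudoforest {W : Type*} [Fintype W] (H : SimpleGraph W) : Prop :=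
  ∀ C : H.ConnectedComponent,
    (H.edgeFinset.filter fun e => ∀ v ∈ e, H.connectedComponentMk v = C).card ≤
      (Finset.univ.filter fun v => H.connectedComponentMk v = C).card

/-- `U` is a pseudoforest deletion set for `G`: `G - U` is a pseudoforest. -/
def IsPFDS [Fintype V] (G : SimpleGraph V) (U : Finset V) : Prop :=
  IsPseudoforest (G.induce {v : V | v ∉ U})

/-- `F` is a feedback vertex set for `G`: `G - F` is acyclic. -/
def IsFVS [Fintype V] (G : SimpleGraph V) (F : Finset V) : Prop :=
  (G.induce {v : V | v ∉ F}).IsAcyclic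

/-- Membership in the orientation polyhedron `P_orient(G)`: for every edge `e = uv`,
`x_u + x_v + y_{e,u} + y_{e,v} ≥ 1`; for every vertex `u`,
`x_u + Σ_{e ∈ δ(u)} y_{e,u} ≤ 1`; and all variables are nonnegative.  The variables
`y e u` for pairs `(e, u)` where `e` is not an edge of `G` or `u` is not an endpoint
of `e` do not occur in the formulation and are pinned to `0`. -/
def POrient [Fintype V] (G : SimpleGraph V) (x : V → ℝ) (y : Sym2 V → V → ℝ) : Prop :=
  (∀ u v, G.Adj u v → 1 ≤ x u + x v + y s(u, v) u + y s(u, v) v) ∧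
  (∀ u, x u + ∑ e ∈ G.edgeFinset.filter (fun e => u ∈ e), y e u ≤ 1) ∧
  (∀ u, 0 ≤ x u) ∧
  (∀ e u, 0 ≤ y e u) ∧
  (∀ e u, ¬ (e ∈ G.edgeSet ∧ u ∈ e) → y e u = 0)

/-- Membership in `Q_orient(G)`, the projection of `P_orient(G)` to the `x`-variables. -/
def QOrient [Fintype V] (G : SimpleGraph V) (x : V → ℝ) : Prop :=
  ∃ y : Sym2 V → V → ℝ, POrient G x y

/-- Membership in the weak density polyhedron `P_WD(G)`:
`x ≥ 0` and `Σ_{u ∈ S} (d_S(u) - 1) x_u ≥ |E[S]| - |S|` for every `S ⊆ V`. -/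
def PWD [Fintype V] (G : SimpleGraph V) (x : V → ℝ) : Prop :=
  (∀ u, 0 ≤ x u) ∧
  ∀ S : Finset V, (edgesIn G S : ℝ) - S.card ≤ ∑ u ∈ S, ((degIn G S u : ℝ) - 1) * x u

/-- Membership in the strong density polyhedron `P_SD(G)`:
`x ≥ 0` and `Σ_{u ∈ S} (d_S(u) - 1) x_u ≥ |E[S]| - |S| + 1` whenever `E[S] ≠ ∅`. -/
def PSD [Fintype V] (G : SimpleGraph V) (x : V → ℝ) : Prop :=
  (∀ u, 0 ≤ x u) ∧
  ∀ S : Finset V, edgesIn G S ≠ 0 →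
    (edgesIn G S : ℝ) - S.card + 1 ≤ ∑ u ∈ S, ((degIn G S u : ℝ) - 1) * x u

/-- The induced subgraph `G[U]` is a cycle: it is connected and `2`-regular. -/
def IsInducedCycle [Fintype V] (G : SimpleGraph V) (U : Finset V) : Prop :=
  (G.induce (U : Set V)).Connected ∧ ∀ u ∈ U, degIn G U u = 2

/-- Membership in the cycle cover polyhedron `P_cycle-cover(G)`. -/
def PCycleCover [Fintype V] (G : SimpleGraph V) (x : V → ℝ) : Prop :=
  (∀ u, 0 ≤ x u) ∧ ∀ U : Finset V, IsInducedCycle G U → 1 ≤ ∑ u ∈ U, x u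

/-- The induced subgraph `G[U]` is a `2`-pseudotree: connected with at least `|U| + 1` edges. -/
def Is2PseudotreeInduced [Fintype V] (G : SimpleGraph V) (U : Finset V) : Prop :=
  (G.induce (U : Set V)).Connected ∧ U.card + 1 ≤ edgesIn G U

/-- Membership in the `2`-pseudotree cover polyhedron `P_2PT-cover(G)`. -/
def P2PTCover [Fintype V] (G : SimpleGraph V) (x : V → ℝ) : Prop :=
  (∀ u, 0 ≤ x u) ∧ ∀ U : Finset V, Is2PseudotreeInduced G U → 1 ≤ ∑ u ∈ U, x u

/-- `(x, y)` is an extreme point of `P_orient(G)`: it is feasible and is not a proper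
convex combination of two distinct points of `P_orient(G)`. -/
def POrientExtreme [Fintype V] (G : SimpleGraph V) (x : V → ℝ) (y : Sym2 V → V → ℝ) : Prop :=
  POrient G x y ∧
    ∀ (x₁ x₂ : V → ℝ) (y₁ y₂ : Sym2 V → V → ℝ) (t : ℝ),
      POrient G x₁ y₁ → POrient G x₂ y₂ → 0 < t → t < 1 →
      (∀ v, x v = t * x₁ v + (1 - t) * x₂ v) →
      (∀ e u, y e u = t * y₁ e u + (1 - t) * y₂ e u) →
      x₁ = x₂ ∧ y₁ = y₂

/-- `(x, y)` is a minimal point of `P_orient(G)`: decreasing any single coordinate by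
any `ε > 0`, keeping the other coordinates unchanged, yields a point outside the
polyhedron. -/
def POrientMinimal [Fintype V] (G : SimpleGraph V) (x : V → ℝ) (y : Sym2 V → V → ℝ) : Prop :=
  (∀ v, ∀ ε : ℝ, 0 < ε → ¬ POrient G (Function.update x v (x v - ε)) y) ∧
  (∀ e u, ∀ ε : ℝ, 0 < ε →
    ¬ POrient G x (fun e' u' => if e' = e ∧ u' = u then y e u - ε else y e' u'))

/-- `x` is an extreme point of `P_WD(G)`: it is feasible and is not a proper convex
combination of two distinct points of `P_WD(G)`. -/
def PWDExtreme [Fintype V] (G : SimpleGraph V) (x : V → ℝ) : Prop :=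
  PWD G x ∧
    ∀ (x₁ x₂ : V → ℝ) (t : ℝ), PWD G x₁ → PWD G x₂ → 0 < t → t < 1 →
      (∀ v, x v = t * x₁ v + (1 - t) * x₂ v) → x₁ = x₂

/-- The support graph `H(y)`: the bipartite graph on `V(G) ⊕ E(G)` joining a vertex `v`
to an edge `e` whenever `v` is an endpoint of the edge `e` of `G` and `y e v > 0`. -/
def supportGraph [Fintype V] (G : SimpleGraph V) (y : Sym2 V → V → ℝ) :
    SimpleGraph (V ⊕ Sym2 V) :=
  SimpleGraph.fromRel fun a b =>
    ∃ v e, a = Sum.inl v ∧ b = Sum.inr e ∧ e ∈ G.edgeSet ∧ v ∈ e ∧ 0 < y e v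

/-- The edge `e` lies on some cycle of `G`. -/
def OnCycle (G : SimpleGraph V) (e : Sym2 V) : Prop :=
  ∃ (u : V) (w : G.Walk u u), w.IsCycle ∧ e ∈ w.edges

/-- `G` has a semi-disjoint cycle: a cycle containing at most one vertex whose degree
in `G` is strictly larger than `2`. -/
def HasSemiDisjointCycle [Fintype V] (G : SimpleGraph V) : Prop :=
  ∃ (u : V) (w : G.Walk u u), w.IsCycle ∧
    (w.support.toFinset.filter fun v => 2 < G.degree v).card ≤ 1

/-- The set `δ(F, V - F)` of edges of `G` with exactly one endpoint in `F`. -/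
def cutEdges [Fintype V] (G : SimpleGraph V) (F : Finset V) : Finset (Sym2 V) :=
  G.edgeFinset.filter fun e => ∃ u v, e = s(u, v) ∧ u ∈ F ∧ v ∉ F

/-- The function `f_x(S) = |E[S]| - |S| - Σ_{u ∈ S} (d_S(u) - 1) x_u`. -/
def fWD [Fintype V] (G : SimpleGraph V) (x : V → ℝ) (S : Finset V) : ℝ :=
  (edgesIn G S : ℝ) - S.card - ∑ u ∈ S, ((degIn G S u : ℝ) - 1) * x u

/-- The row vector `row(S)` of the weak density constraint for the set `S`:
its coordinate at `u` is `d_S(u) - 1` if `u ∈ S` and `0` otherwise. -/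
def rowWD [Fintype V] (G : SimpleGraph V) (S : Finset V) (u : V) : ℝ :=
  if u ∈ S then (degIn G S u : ℝ) - 1 else 0

/-- The constraints (orientation), (load), (cumulative) and nonnegativity of the
purely orientation-based ILP formulation for FVS, with one copy `y f` of the
orientation variables for each edge `f` of `G`:
* `x_v + x_w + y^f_{e,v} + y^f_{e,w} ≥ 1` for all edges `e = vw` and all `f ∈ E`;
* `x_v + Σ_{e = vw ∈ E} y^f_{e,w} ≥ 1` for all `v ∈ V` and all `f ∈ E`;
* `Σ_{v ∈ V - {a,b}} x_v + Σ_{e = vw ∈ E - {f}} (y^f_{e,w} + y^f_{e,v}) ≤ |V| - 2`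
  for all `f = ab ∈ E`; and all variables nonnegative. -/
def OrientSD [Fintype V] (G : SimpleGraph V) (x : V → ℝ)
    (y : Sym2 V → Sym2 V → V → ℝ) : Prop :=
  (∀ f ∈ G.edgeSet, ∀ v w, G.Adj v w →
    1 ≤ x v + x w + y f s(v, w) v + y f s(v, w) w) ∧
  (∀ f ∈ G.edgeSet, ∀ v : V, 1 ≤ x v + ∑ w ∈ G.neighborFinset v, y f s(v, w) w) ∧
  (∀ a b : V, G.Adj a b →
    (∑ v ∈ Finset.univ \ {a, b}, x v) +
      (∑ e ∈ G.edgeFinset.erase s(a, b),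
        ∑ u ∈ Finset.univ.filter (fun u => u ∈ e), y s(a, b) e u)
      ≤ (Fintype.card V : ℝ) - 2) ∧
  (∀ u, 0 ≤ x u) ∧ (∀ f e u, 0 ≤ y f e u)

end
end FVS


namespace FVS

section Development
variable {V : Type*}

section Infra
variable [Fintype V] (G : SimpleGraph V)

lemma degIn_mono {S T : Finset V} (h : S ⊆ T) (u : V) : degIn G S u ≤ degIn G T u :=
  Finset.card_le_card (Finset.filter_subset_filter _ h)

lemma degIn_union {S T : Finset V} (h : Disjoint S T) (u : V) :
    degIn G (S ∪ T) u = degIn G S u + degIn G T u := by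
  unfold degIn
  rw [Finset.filter_union, Finset.card_union_of_disjoint (Finset.disjoint_filter_filter h)]

lemma degIn_insert_self {S : Finset V} (a : V) : degIn G (insert a S) a = degIn G S a := by
  unfold degIn
  rw [Finset.filter_insert, if_neg (G.loopless.irrefl a)]

lemma degIn_insert_of_ne {S : Finset V} {a : V} (ha : a ∉ S) (v : V) :
    degIn G (insert a S) v = degIn G S v + if G.Adj v a then 1 else 0 := by
  unfold degIn
  rw [Finset.filter_insert]
  split
  · rw [Finset.card_insert_of_notMem (fun h => ha (Finset.mem_of_mem_filter _ h))]
  · simp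

lemma degIn_erase_self {S : Finset V} (a : V) : degIn G (S.erase a) a = degIn G S a := by
  unfold degIn
  congr 1
  ext v
  simp only [Finset.mem_filter, Finset.mem_erase]
  constructor
  · rintro ⟨⟨_, hv⟩, ha⟩; exact ⟨hv, ha⟩
  · rintro ⟨hv, ha⟩; exact ⟨⟨fun h => (G.irrefl (h ▸ ha)), hv⟩, ha⟩

lemma edgesIn_empty : edgesIn G (∅ : Finset V) = 0 := by
  unfold edgesIn
  rw [Finset.card_eq_zero, Finset.filter_eq_empty_iff]
  intro e _
  induction e with
  | _ a b =>
    intro h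
    exact absurd (h a (Sym2.mem_mk_left a b)) (Finset.notMem_empty a)

lemma edgesIn_insert {S : Finset V} {a : V} (ha : a ∉ S) :
    edgesIn G (insert a S) = edgesIn G S + degIn G S a := by
  unfold edgesIn degIn
  rw [← Finset.card_filter_add_card_filter_not
    (s := G.edgeFinset.filter fun e => ∀ v ∈ e, v ∈ insert a S) (p := fun e => a ∈ e)]
  have h1 : (G.edgeFinset.filter fun e => ∀ v ∈ e, v ∈ insert a S).filter (fun e => ¬ a ∈ e)
      = G.edgeFinset.filter (fun e => ∀ v ∈ e, v ∈ S) := by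
    rw [Finset.filter_filter]
    apply Finset.filter_congr
    intro e he
    constructor
    · rintro ⟨hall, hae⟩ v hv
      rcases Finset.mem_insert.mp (hall v hv) with h | h
      · exact absurd (h ▸ hv) hae
      · exact h
    · intro hall
      refine ⟨fun v hv => Finset.mem_insert_of_mem (hall v hv), fun hae => ha (hall a hae)⟩
  have h2 : (G.edgeFinset.filter fun e => ∀ v ∈ e, v ∈ insert a S).filter (fun e => a ∈ e)
      = (S.filter fun v => G.Adj a v).image (fun v => s(a, v)) := by
    ext e
    simp only [Finset.mem_filter, Finset.mem_image]
    constructor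
    · rintro ⟨⟨heE, hall⟩, hae⟩
      obtain ⟨y, rfl⟩ := Sym2.mem_iff_exists.mp hae
      have hadj : G.Adj a y := (SimpleGraph.mem_edgeFinset.mp heE)
      have hy : y ∈ S := by
        rcases Finset.mem_insert.mp (hall y (Sym2.mem_mk_right a y)) with h | h
        · exact absurd h.symm hadj.ne
        · exact h
      exact ⟨y, by simp [hy, hadj], rfl⟩
    · rintro ⟨v, hv, rfl⟩
      obtain ⟨hvS, hadj⟩ := hv
      refine ⟨⟨SimpleGraph.mem_edgeFinset.mpr hadj, ?_⟩, Sym2.mem_mk_left a v⟩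
      intro w hw
      rcases Sym2.mem_iff.mp hw with rfl | rfl
      · exact Finset.mem_insert_self _ _
      · exact Finset.mem_insert_of_mem hvS
  rw [h1, h2, Finset.card_image_of_injective _ (fun x y h => Sym2.congr_right.mp h), add_comm]

lemma edgesIn_erase {S : Finset V} {a : V} (ha : a ∈ S) :
    edgesIn G S = edgesIn G (S.erase a) + degIn G S a := by
  conv_lhs => rw [← Finset.insert_erase ha]
  rw [edgesIn_insert G (Finset.notMem_erase a S), degIn_erase_self]

lemma sum_degIn (S : Finset V) : ∑ v ∈ S, degIn G S v = 2 * edgesIn G S := by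
  induction S using Finset.induction_on with
  | empty => simp [edgesIn_empty]
  | insert a S ha ih =>
    rw [Finset.sum_insert ha, degIn_insert_self, edgesIn_insert G ha]
    have : ∀ v ∈ S, degIn G (insert a S) v = degIn G S v + if G.Adj v a then 1 else 0 :=
      fun v _ => degIn_insert_of_ne G ha v
    rw [Finset.sum_congr rfl this, Finset.sum_add_distrib, ih]
    have h2 : (∑ x ∈ S, if G.Adj x a then 1 else 0) = degIn G S a := by
      rw [← Finset.card_filter]
      unfold degIn
      congr 1
      apply Finset.filter_congr
      intro v _
      simp [G.adj_comm]
    rw [h2]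
    ring

lemma sum_degIn_comm (S T : Finset V) : ∑ u ∈ S, degIn G T u = ∑ v ∈ T, degIn G S v := by
  unfold degIn
  simp_rw [Finset.card_filter]
  rw [Finset.sum_comm]
  apply Finset.sum_congr rfl
  intro v _
  apply Finset.sum_congr rfl
  intro u _
  simp [G.adj_comm]

lemma edgesIn_union {U R : Finset V} (h : Disjoint U R) :
    edgesIn G (U ∪ R) = edgesIn G U + edgesIn G R + ∑ u ∈ U, degIn G R u := by
  induction U using Finset.induction_on with
  | empty => simp [edgesIn_empty]
  | insert a U ha ih =>
    have hdisj : Disjoint U R := (Finset.disjoint_insert_left.mp h).2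
    have haR : a ∉ R := (Finset.disjoint_insert_left.mp h).1
    have haUR : a ∉ U ∪ R := by simp [ha, haR]
    rw [Finset.insert_union, edgesIn_insert G haUR, ih hdisj, edgesIn_insert G ha,
      degIn_union G hdisj, Finset.sum_insert ha]
    ring

end Infra
section Chunk2
variable [Fintype V] (G : SimpleGraph V)

def GoodF (B : Finset V) : Prop := ∀ T ⊆ B, edgesIn G T ≤ T.card

lemma goodF_subset {B B' : Finset V} (h : GoodF G B) (h' : B' ⊆ B) : GoodF G B' :=
  fun T hT => h T (hT.trans h')

lemma exists_min_violator {A : Finset V} (h : ¬ GoodF G A) :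
    ∃ T, T ⊆ A ∧ T.card + 1 ≤ edgesIn G T ∧ ∀ v ∈ T, 2 ≤ degIn G T v := by
  unfold GoodF at h
  push_neg at h
  obtain ⟨T0, hT0A, hT0⟩ := h
  classical
  set VS := A.powerset.filter (fun T => T.card + 1 ≤ edgesIn G T) with hVS
  have hne : VS.Nonempty := ⟨T0, by
    simp only [hVS, Finset.mem_filter, Finset.mem_powerset]
    exact ⟨hT0A, by omega⟩⟩
  obtain ⟨T, hTmem, hmin⟩ := Finset.exists_min_image VS Finset.card hne
  simp only [hVS, Finset.mem_filter, Finset.mem_powerset] at hTmem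
  refine ⟨T, hTmem.1, hTmem.2, ?_⟩
  intro v hv
  have herase : ¬ ((T.erase v).card + 1 ≤ edgesIn G (T.erase v)) := by
    intro hcon
    have hmem' : T.erase v ∈ VS := by
      simp only [hVS, Finset.mem_filter, Finset.mem_powerset]
      exact ⟨(Finset.erase_subset _ _).trans hTmem.1, hcon⟩
    have := hmin _ hmem'
    have hc := Finset.card_erase_of_mem hv
    have hpos : 0 < T.card := Finset.card_pos.mpr ⟨v, hv⟩
    omega
  have hsplit := edgesIn_erase G hv
  have hc := Finset.card_erase_of_mem hv
  have hpos : 0 < T.card := Finset.card_pos.mpr ⟨v, hv⟩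
  have h2 := hTmem.2
  omega

/-- The subgraph of `G` restricted to vertex set `R` (as a graph on `V`). -/
def resG (R : Finset V) : SimpleGraph V where
  Adj a b := G.Adj a b ∧ a ∈ R ∧ b ∈ R
  symm := ⟨by rintro a b ⟨h, ha, hb⟩; exact ⟨h.symm, hb, ha⟩⟩
  loopless := ⟨by rintro a ⟨h, _, _⟩; exact G.loopless.irrefl a h⟩

/-- Connected component of `v` within `R`, as a finset. -/
noncomputable def compOf (R : Finset V) (v : V) : Finset V :=
  R.filter fun w => (resG G R).Reachable v w

noncomputable def compsOf (R : Finset V) : Finset (Finset V) := R.image (compOf G R)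

variable {R : Finset V}

lemma mem_compOf_self {v : V} (hv : v ∈ R) : v ∈ compOf G R v :=
  Finset.mem_filter.mpr ⟨hv, SimpleGraph.Reachable.refl v⟩

lemma compOf_subset (v : V) : compOf G R v ⊆ R := Finset.filter_subset _ _

lemma compOf_eq_of_mem {v w : V} (hw : w ∈ compOf G R v) : compOf G R w = compOf G R v := by
  obtain ⟨hwR, hreach⟩ := Finset.mem_filter.mp hw
  ext z
  simp only [compOf, Finset.mem_filter]
  exact ⟨fun ⟨hz, h⟩ => ⟨hz, hreach.trans h⟩, fun ⟨hz, h⟩ => ⟨hz, hreach.symm.trans h⟩⟩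

lemma mem_comp_iff {C : Finset V} (hC : C ∈ compsOf G R) {v : V} (hv : v ∈ R) :
    v ∈ C ↔ compOf G R v = C := by
  obtain ⟨r, _, rfl⟩ := Finset.mem_image.mp hC
  constructor
  · exact fun h => compOf_eq_of_mem G h
  · intro h; rw [← h]; exact mem_compOf_self G hv

lemma comp_nonempty {C : Finset V} (hC : C ∈ compsOf G R) : C.Nonempty := by
  obtain ⟨r, hr, rfl⟩ := Finset.mem_image.mp hC
  exact ⟨r, mem_compOf_self G hr⟩

lemma comp_subset {C : Finset V} (hC : C ∈ compsOf G R) : C ⊆ R := by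
  obtain ⟨r, _, rfl⟩ := Finset.mem_image.mp hC
  exact compOf_subset G r

lemma adj_mem_comp {C : Finset V} (hC : C ∈ compsOf G R) {v w : V}
    (hv : v ∈ C) (hadj : G.Adj v w) (hw : w ∈ R) : w ∈ C := by
  have hvR : v ∈ R := comp_subset G hC hv
  rw [mem_comp_iff G hC hvR] at hv
  rw [mem_comp_iff G hC hw, ← hv]
  apply compOf_eq_of_mem
  exact Finset.mem_filter.mpr ⟨hw, SimpleGraph.Adj.reachable ⟨hadj, hvR, hw⟩⟩

/-- Neighbors within `R` of a vertex of a component all lie in that component. -/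
lemma degIn_comp_eq {C : Finset V} (hC : C ∈ compsOf G R) {v : V} (hv : v ∈ C) :
    degIn G R v = degIn G C v := by
  unfold degIn
  congr 1
  ext w
  simp only [Finset.mem_filter]
  constructor
  · rintro ⟨hwR, hadj⟩
    exact ⟨adj_mem_comp G hC hv hadj hwR, hadj⟩
  · rintro ⟨hwC, hadj⟩
    exact ⟨comp_subset G hC hwC, hadj⟩

lemma card_comp_partition {t : Finset V} (ht : t ⊆ R) :
    t.card = ∑ C ∈ compsOf G R, (t ∩ C).card := by
  rw [Finset.card_eq_sum_card_fiberwise (f := compOf G R) (t := compsOf G R)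
    (fun x hx => Finset.mem_image_of_mem _ (ht hx))]
  apply Finset.sum_congr rfl
  intro C hC
  congr 1
  ext v
  simp only [Finset.mem_filter, Finset.mem_inter]
  constructor
  · rintro ⟨hv, h⟩
    exact ⟨hv, (mem_comp_iff G hC (ht hv)).mpr h⟩
  · rintro ⟨hv, h⟩
    exact ⟨hv, (mem_comp_iff G hC (ht hv)).mp h⟩

lemma degIn_comp_partition {t : Finset V} (ht : t ⊆ R) (u : V) :
    degIn G t u = ∑ C ∈ compsOf G R, degIn G (t ∩ C) u := by
  unfold degIn
  have : t.filter (fun v => G.Adj u v) ⊆ R := (Finset.filter_subset _ _).trans ht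
  rw [card_comp_partition G this]
  apply Finset.sum_congr rfl
  intro C _
  congr 1
  ext v
  simp only [Finset.mem_filter, Finset.mem_inter]
  tauto

lemma edgesIn_comp_partition {t : Finset V} (ht : t ⊆ R) :
    edgesIn G t = ∑ C ∈ compsOf G R, edgesIn G (t ∩ C) := by
  classical
  unfold edgesIn
  have hcomm : ∀ a b : V, compOf G R a ∪ compOf G R b = compOf G R b ∪ compOf G R a := by
    intro a b; exact Finset.union_comm _ _
  set f : Sym2 V → Finset V := Sym2.lift ⟨fun a b => compOf G R a ∪ compOf G R b, hcomm⟩ with hf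
  have hmem : ∀ e ∈ G.edgeFinset.filter (fun e => ∀ v ∈ e, v ∈ t), f e ∈ compsOf G R := by
    intro e he
    induction e with
    | _ a b =>
      obtain ⟨heE, hall⟩ := Finset.mem_filter.mp he
      have hadj : G.Adj a b := SimpleGraph.mem_edgeFinset.mp heE
      have haR : a ∈ R := ht (hall a (Sym2.mem_mk_left a b))
      have hbR : b ∈ R := ht (hall b (Sym2.mem_mk_right a b))
      have hba : b ∈ compOf G R a :=
        Finset.mem_filter.mpr ⟨hbR, SimpleGraph.Adj.reachable ⟨hadj, haR, hbR⟩⟩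
      have : f s(a, b) = compOf G R a := by
        simp only [hf, Sym2.lift_mk]
        rw [compOf_eq_of_mem G hba, Finset.union_self]
      rw [this]
      exact Finset.mem_image_of_mem _ haR
  rw [Finset.card_eq_sum_card_fiberwise hmem]
  apply Finset.sum_congr rfl
  intro C hC
  rw [Finset.filter_filter]
  congr 1
  apply Finset.filter_congr
  intro e heE
  induction e with
  | _ a b =>
    have hadj : G.Adj a b := SimpleGraph.mem_edgeFinset.mp heE
    constructor
    · rintro ⟨hall, hfC⟩ v hv
      have haR : a ∈ R := ht (hall a (Sym2.mem_mk_left a b))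
      have hbR : b ∈ R := ht (hall b (Sym2.mem_mk_right a b))
      have hba : b ∈ compOf G R a :=
        Finset.mem_filter.mpr ⟨hbR, SimpleGraph.Adj.reachable ⟨hadj, haR, hbR⟩⟩
      have hfa : f s(a, b) = compOf G R a := by
        simp only [hf, Sym2.lift_mk]
        rw [compOf_eq_of_mem G hba, Finset.union_self]
      have haC : a ∈ C := by
        rw [mem_comp_iff G hC haR, ← hfa, hfC]
      have hbC : b ∈ C := by
        rw [← hfC, hfa]
        exact hba
      rcases Sym2.mem_iff.mp hv with rfl | rfl
      · exact Finset.mem_inter.mpr ⟨hall v (Sym2.mem_mk_left _ _), haC⟩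
      · exact Finset.mem_inter.mpr ⟨hall v (Sym2.mem_mk_right _ _), hbC⟩
    · intro hall
      have haC : a ∈ C := (Finset.mem_inter.mp (hall a (Sym2.mem_mk_left a b))).2
      have hbC : b ∈ C := (Finset.mem_inter.mp (hall b (Sym2.mem_mk_right a b))).2
      have hat : a ∈ t := (Finset.mem_inter.mp (hall a (Sym2.mem_mk_left a b))).1
      have hbt : b ∈ t := (Finset.mem_inter.mp (hall b (Sym2.mem_mk_right a b))).1
      refine ⟨?_, ?_⟩
      · intro v hv
        rcases Sym2.mem_iff.mp hv with rfl | rfl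
        · exact hat
        · exact hbt
      · simp only [hf, Sym2.lift_mk]
        rw [(mem_comp_iff G hC (ht hat)).mp haC, (mem_comp_iff G hC (ht hbt)).mp hbC,
          Finset.union_self]

lemma walk_exit {H : SimpleGraph V} {t : Finset V} :
    ∀ {p v : V}, H.Walk p v → p ∈ t → v ∉ t → ∃ a b, H.Adj a b ∧ a ∈ t ∧ b ∉ t := by
  intro p v w
  induction w with
  | nil => intro h h'; exact absurd h h'
  | @cons u x y h w ih =>
    intro hp hv
    by_cases hx : x ∈ t
    · exact ih hx hv
    · exact ⟨u, x, h, hp, hx⟩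

/-- Excess is monotone under growing to the full component. -/
lemma exc_le_comp {C : Finset V} (hC : C ∈ compsOf G R) :
    ∀ {t : Finset V}, t ⊆ C → t.Nonempty →
      (edgesIn G t : ℤ) - t.card ≤ (edgesIn G C : ℤ) - C.card := by
  suffices h : ∀ (k : ℕ) (t : Finset V), (C \ t).card = k → t ⊆ C → t.Nonempty →
      (edgesIn G t : ℤ) - t.card ≤ (edgesIn G C : ℤ) - C.card by
    intro t ht hne
    exact h _ t rfl ht hne
  intro k
  induction k with
  | zero =>
    intro t hk ht _
    have : t = C := Finset.Subset.antisymm ht (fun v hv => by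
      by_contra hvt
      have : v ∈ C \ t := Finset.mem_sdiff.mpr ⟨hv, hvt⟩
      rw [Finset.card_eq_zero.mp hk] at this
      exact absurd this (Finset.notMem_empty v))
    rw [this]
  | succ k ih =>
    intro t hk ht hne
    have hst : t ≠ C := by
      intro h
      rw [h, Finset.sdiff_self] at hk
      simp at hk
    obtain ⟨v, hvC, hvt⟩ : ∃ v, v ∈ C ∧ v ∉ t := by
      by_contra h
      push_neg at h
      exact hst (Finset.Subset.antisymm ht (fun v hv => h v hv))
    obtain ⟨p, hp⟩ := hne
    -- walk from p to v inside resG G R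
    obtain ⟨r, hr, rfl⟩ := Finset.mem_image.mp hC
    have hreach : (resG G R).Reachable p v := by
      have h1 : (resG G R).Reachable r p := (Finset.mem_filter.mp (ht hp)).2
      have h2 : (resG G R).Reachable r v := (Finset.mem_filter.mp hvC).2
      exact h1.symm.trans h2
    obtain ⟨w⟩ := hreach
    obtain ⟨a, b, hab, hat, hbt⟩ := walk_exit w hp hvt
    have haC : a ∈ compOf G R r := ht hat
    have hbC : b ∈ compOf G R r := adj_mem_comp G hC haC hab.1 hab.2.2
    have hins : edgesIn G (insert b t) = edgesIn G t + degIn G t b := edgesIn_insert G hbt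
    have hdeg : 1 ≤ degIn G t b := by
      apply Finset.card_pos.mpr
      exact ⟨a, Finset.mem_filter.mpr ⟨hat, hab.1.symm⟩⟩
    have hcard : (insert b t).card = t.card + 1 := Finset.card_insert_of_notMem hbt
    have hsub : insert b t ⊆ compOf G R r := Finset.insert_subset hbC ht
    have hk' : (compOf G R r \ insert b t).card = k := by
      have : compOf G R r \ insert b t = (compOf G R r \ t).erase b := by
        ext z
        simp only [Finset.mem_sdiff, Finset.mem_insert, Finset.mem_erase]
        tauto
      rw [this, Finset.card_erase_of_mem (Finset.mem_sdiff.mpr ⟨hbC, hbt⟩), hk]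
      rfl
    have := ih (insert b t) hk' hsub ⟨b, Finset.mem_insert_self b t⟩
    have hexc : (edgesIn G t : ℤ) - t.card ≤ (edgesIn G (insert b t) : ℤ) - (insert b t).card := by
      rw [hins, hcard]
      push_cast
      omega
    exact hexc.trans this

end Chunk2

section Chunk3
variable [Fintype V] (G : SimpleGraph V)

lemma degIn_empty (u : V) : degIn G ∅ u = 0 := by simp [degIn]

lemma edgesIn_singleton (v : V) : edgesIn G {v} = 0 := by
  have : ({v} : Finset V) = insert v ∅ := rfl
  rw [this, edgesIn_insert G (Finset.notMem_empty v), edgesIn_empty, degIn_empty]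

/-- Key combinatorial lemma: in a graph with minimum degree 2 on `B`, any
"minimal-style" pseudoforest deletion set `U` has total weight at most `3 (m - n)`. -/
lemma lemmaStar {B U : Finset V} (hUB : U ⊆ B)
    (hdeg : ∀ v ∈ B, 2 ≤ degIn G B v)
    (hGood : GoodF G (B \ U))
    (hwit : ∀ u ∈ U, ∃ T, T ⊆ (B \ U) ∪ {u} ∧ T.card + 1 ≤ edgesIn G T) :
    ∑ u ∈ U, ((degIn G B u : ℤ) - 1) ≤ 3 * ((edgesIn G B : ℤ) - B.card) := by
  classical
  set R := B \ U with hR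
  have hdisj : Disjoint U R := Finset.disjoint_sdiff
  have hBUR : U ∪ R = B := Finset.union_sdiff_of_subset hUB
  -- witnesses
  have hwit2 : ∀ u : V, ∃ T : Finset V,
      u ∈ U → (T.erase u ⊆ R ∧ u ∈ T ∧ T.card + 1 ≤ edgesIn G T) := by
    intro u
    by_cases hu : u ∈ U
    · obtain ⟨T, hT1, hT2⟩ := hwit u hu
      have huT : u ∈ T := by
        by_contra hu'
        have hTR : T ⊆ R := by
          intro v hv
          rcases Finset.mem_union.mp (hT1 hv) with h | h
          · exact h
          · rw [Finset.mem_singleton] at h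
            exact absurd (h ▸ hv) hu'
        have := hGood T hTR
        omega
      refine ⟨T, fun _ => ⟨?_, huT, hT2⟩⟩
      intro v hv
      obtain ⟨hne, hvT⟩ := Finset.mem_erase.mp hv
      rcases Finset.mem_union.mp (hT1 hvT) with h | h
      · exact h
      · exact absurd (Finset.mem_singleton.mp h) hne
    · exact ⟨∅, fun h => absurd h hu⟩
  choose Tw hTw using hwit2
  set t : V → Finset V := fun u => (Tw u).erase u with ht
  set comps := compsOf G R with hcomps
  set TT := comps.filter (fun C => edgesIn G C < C.card) with hTT
  set hitC : Finset V → Prop := fun C => ∃ u ∈ U, ((t u) ∩ C).Nonempty with hhit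
  set T1 := TT.filter hitC with hT1d
  set T0 := TT.filter (fun C => ¬ hitC C) with hT0d
  have hT1sub : T1 ⊆ TT := Finset.filter_subset _ _
  have hT0sub : T0 ⊆ TT := Finset.filter_subset _ _
  have hTTsub : TT ⊆ comps := Finset.filter_subset _ _
  -- (W3): every C ∈ TT receives at least 2 edges from U
  have hW3 : ∀ C ∈ TT, 2 ≤ ∑ u ∈ U, (degIn G C u : ℤ) := by
    intro C hC'
    have hC : C ∈ comps := hTTsub hC'
    have hCe : edgesIn G C < C.card := (Finset.mem_filter.mp hC').2
    have hCR : C ⊆ R := comp_subset G hC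
    have hswap : ∑ u ∈ U, degIn G C u = ∑ v ∈ C, degIn G U v := sum_degIn_comm G U C
    have hsplit : ∀ v ∈ C, degIn G U v + degIn G R v = degIn G B v := by
      intro v _
      rw [← hBUR, degIn_union G hdisj]
    have hcompdeg : ∀ v ∈ C, degIn G R v = degIn G C v := fun v hv => degIn_comp_eq G hC hv
    have hsum1 : ∑ v ∈ C, degIn G B v ≥ 2 * C.card := by
      calc 2 * C.card = ∑ _v ∈ C, 2 := by rw [Finset.sum_const, smul_eq_mul, mul_comm]
      _ ≤ ∑ v ∈ C, degIn G B v := Finset.sum_le_sum (fun v hv => hdeg v ((hCR.trans (Finset.sdiff_subset)) hv))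
    have hsum2 : ∑ v ∈ C, degIn G C v = 2 * edgesIn G C := sum_degIn G C
    have hsum3 : ∑ v ∈ C, degIn G U v + ∑ v ∈ C, degIn G C v = ∑ v ∈ C, degIn G B v := by
      rw [← Finset.sum_add_distrib]
      apply Finset.sum_congr rfl
      intro v hv
      rw [← hcompdeg v hv, hsplit v hv]
    have : 2 * C.card ≤ ∑ v ∈ C, degIn G U v + 2 * edgesIn G C := by omega
    have h2 : 2 ≤ ∑ v ∈ C, degIn G U v := by omega
    have h3 : 2 ≤ ∑ u ∈ U, degIn G C u := by rw [hswap]; exact h2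
    exact_mod_cast h3
  -- (W1): per-u inequality
  have hW1 : ∀ u ∈ U,
      (2 : ℤ) + ((TT.filter (fun C => ((t u) ∩ C).Nonempty)).card : ℤ)
        + ∑ C ∈ T0, (degIn G C u : ℤ) ≤ (degIn G R u : ℤ) := by
    intro u hu
    obtain ⟨htuR, huT, hviol⟩ := hTw u hu
    have htusub : t u ⊆ R := htuR
    have hins : edgesIn G (Tw u) = edgesIn G (t u) + degIn G (Tw u) u := by
      rw [edgesIn_erase G huT]
    have hdegsame : degIn G (Tw u) u = degIn G (t u) u := (degIn_erase_self G u).symm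
    have hcard : (Tw u).card = (t u).card + 1 := by
      rw [ht]
      simp only []
      rw [Finset.card_erase_of_mem huT]
      have : 0 < (Tw u).card := Finset.card_pos.mpr ⟨u, huT⟩
      omega
    have hstart : (2 : ℤ) ≤ ((edgesIn G (t u) : ℤ) - (t u).card) + degIn G (t u) u := by
      have h1 : ((Tw u).card : ℤ) + 1 ≤ edgesIn G (Tw u) := by exact_mod_cast hviol
      rw [hins, hdegsame] at h1
      rw [hcard] at h1
      push_cast at h1
      linarith
    have hE : edgesIn G (t u) = ∑ C ∈ comps, edgesIn G ((t u) ∩ C) :=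
      edgesIn_comp_partition G htusub
    have hN : (t u).card = ∑ C ∈ comps, ((t u) ∩ C).card :=
      card_comp_partition G htusub
    have hD : degIn G (t u) u = ∑ C ∈ comps, degIn G ((t u) ∩ C) u :=
      degIn_comp_partition G htusub u
    have hperC : ∀ C ∈ comps,
        (edgesIn G ((t u) ∩ C) : ℤ) - ((t u) ∩ C).card + degIn G ((t u) ∩ C) u
          ≤ (degIn G C u : ℤ) - (if C ∈ T0 then (degIn G C u : ℤ) else 0)
            - (if C ∈ TT ∧ ((t u) ∩ C).Nonempty then 1 else 0) := by
      intro C hC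
      by_cases hne : ((t u) ∩ C).Nonempty
      · have hnotT0 : C ∉ T0 := by
          intro hC0
          have := (Finset.mem_filter.mp hC0).2
          exact this ⟨u, hu, hne⟩
        rw [if_neg hnotT0]
        have hmono : (edgesIn G ((t u) ∩ C) : ℤ) - ((t u) ∩ C).card
            ≤ (edgesIn G C : ℤ) - C.card :=
          exc_le_comp G hC (Finset.inter_subset_right) hne
        have hdmono : degIn G ((t u) ∩ C) u ≤ degIn G C u :=
          degIn_mono G (Finset.inter_subset_right) u
        by_cases hCT : C ∈ TT
        · rw [if_pos ⟨hCT, hne⟩]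
          have : edgesIn G C < C.card := (Finset.mem_filter.mp hCT).2
          have hexc : (edgesIn G C : ℤ) - C.card ≤ -1 := by
            have := this
            omega
          have : (degIn G ((t u) ∩ C) u : ℤ) ≤ degIn G C u := by exact_mod_cast hdmono
          linarith
        · rw [if_neg (fun h => hCT h.1)]
          have hg : edgesIn G C ≤ C.card := hGood C (comp_subset G hC)
          have hexc : (edgesIn G C : ℤ) - C.card ≤ 0 := by
            have := hg; omega
          have : (degIn G ((t u) ∩ C) u : ℤ) ≤ degIn G C u := by exact_mod_cast hdmono
          linarith
      · rw [Finset.not_nonempty_iff_eq_empty] at hne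
        rw [hne, edgesIn_empty, degIn_empty]
        simp only [Finset.card_empty, Finset.not_nonempty_empty, and_false, if_false]
        by_cases hC0 : C ∈ T0
        · rw [if_pos hC0]
          simp
        · rw [if_neg hC0]
          simp [Int.natCast_nonneg]
    have hsum := Finset.sum_le_sum hperC
    -- LHS of hsum equals edgesIn (t u) - card + degIn … via partitions
    have hlhs : ∑ C ∈ comps, ((edgesIn G ((t u) ∩ C) : ℤ) - ((t u) ∩ C).card
        + degIn G ((t u) ∩ C) u)
        = (edgesIn G (t u) : ℤ) - (t u).card + degIn G (t u) u := by
      rw [hE, hN, hD]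
      push_cast
      rw [Finset.sum_add_distrib, Finset.sum_sub_distrib]
    -- RHS pieces
    have hrhs1 : ∑ C ∈ comps, (degIn G C u : ℤ) = (degIn G R u : ℤ) := by
      have := degIn_comp_partition G (Finset.Subset.refl R) u
      have hRC : ∀ C ∈ comps, R ∩ C = C := by
        intro C hC
        exact Finset.inter_eq_right.mpr (comp_subset G hC)
      rw [Finset.sum_congr rfl (fun C hC => by rw [hRC C hC])] at this
      rw [this]
      push_cast
      rfl
    have hrhs2 : ∑ C ∈ comps, (if C ∈ T0 then (degIn G C u : ℤ) else 0)
        = ∑ C ∈ T0, (degIn G C u : ℤ) := by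
      rw [Finset.sum_ite_mem]
      congr 1
      exact Finset.inter_eq_right.mpr (hT0sub.trans hTTsub)
    have hrhs3 : ∑ C ∈ comps, (if C ∈ TT ∧ ((t u) ∩ C).Nonempty then (1 : ℤ) else 0)
        = ((TT.filter (fun C => ((t u) ∩ C).Nonempty)).card : ℤ) := by
      rw [Finset.sum_ite, Finset.sum_const_zero, add_zero, Finset.sum_const]
      have : comps.filter (fun C => C ∈ TT ∧ ((t u) ∩ C).Nonempty)
          = TT.filter (fun C => ((t u) ∩ C).Nonempty) := by
        ext C
        simp only [Finset.mem_filter]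
        constructor
        · rintro ⟨_, h1, h2⟩; exact ⟨h1, h2⟩
        · rintro ⟨h1, h2⟩; exact ⟨hTTsub h1, h1, h2⟩
      rw [this]
      simp
    rw [hlhs] at hsum
    rw [Finset.sum_sub_distrib, Finset.sum_sub_distrib, hrhs1, hrhs2, hrhs3] at hsum
    linarith
  -- Sum (W1) over u
  have hW1sum : 2 * (U.card : ℤ)
      + ∑ u ∈ U, ((TT.filter (fun C => ((t u) ∩ C).Nonempty)).card : ℤ)
      + ∑ u ∈ U, ∑ C ∈ T0, (degIn G C u : ℤ)
      ≤ ∑ u ∈ U, (degIn G R u : ℤ) := by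
    have := Finset.sum_le_sum hW1
    rw [Finset.sum_add_distrib, Finset.sum_add_distrib, Finset.sum_const] at this
    simp only [nsmul_eq_mul] at this
    linarith [this]
  -- (W2): P ≥ |T1|
  have hW2 : (T1.card : ℤ) ≤ ∑ u ∈ U, ((TT.filter (fun C => ((t u) ∩ C).Nonempty)).card : ℤ) := by
    have hswap : ∑ u ∈ U, ((TT.filter (fun C => ((t u) ∩ C).Nonempty)).card : ℤ)
        = ∑ C ∈ TT, ∑ u ∈ U, (if ((t u) ∩ C).Nonempty then (1 : ℤ) else 0) := by
      rw [Finset.sum_comm]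
      apply Finset.sum_congr rfl
      intro u _
      rw [Finset.sum_ite, Finset.sum_const_zero, add_zero, Finset.sum_const]
      simp
    rw [hswap]
    have : (T1.card : ℤ) = ∑ C ∈ TT, (if hitC C then (1 : ℤ) else 0) := by
      rw [Finset.sum_ite, Finset.sum_const_zero, add_zero, Finset.sum_const, hT1d]
      simp
    rw [this]
    apply Finset.sum_le_sum
    intro C hC
    by_cases hh : hitC C
    · rw [if_pos hh]
      obtain ⟨u, huU, hne⟩ := hh
      calc (1 : ℤ) = (if ((t u) ∩ C).Nonempty then (1:ℤ) else 0) := by rw [if_pos hne]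
      _ ≤ ∑ u' ∈ U, (if ((t u') ∩ C).Nonempty then (1:ℤ) else 0) := by
          apply Finset.single_le_sum (f := fun u' => (if ((t u') ∩ C).Nonempty then (1:ℤ) else 0)) _ huU
          intro i _
          split <;> norm_num
    · rw [if_neg hh]
      apply Finset.sum_nonneg
      intro i _
      split <;> norm_num
  -- (W4): second copy of A
  have hAeq : ∑ u ∈ U, (degIn G R u : ℤ) = ∑ C ∈ comps, ∑ u ∈ U, (degIn G C u : ℤ) := by
    rw [Finset.sum_comm]
    apply Finset.sum_congr rfl
    intro u _
    have := degIn_comp_partition G (Finset.Subset.refl R) u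
    have hRC : ∀ C ∈ comps, R ∩ C = C := fun C hC => Finset.inter_eq_right.mpr (comp_subset G hC)
    rw [Finset.sum_congr rfl (fun C hC => by rw [hRC C hC])] at this
    rw [this]
    push_cast
    rfl
  have hA0swap : ∑ u ∈ U, ∑ C ∈ T0, (degIn G C u : ℤ) = ∑ C ∈ T0, ∑ u ∈ U, (degIn G C u : ℤ) :=
    Finset.sum_comm
  have hA02 : 2 * (T0.card : ℤ) ≤ ∑ C ∈ T0, ∑ u ∈ U, (degIn G C u : ℤ) := by
    calc 2 * (T0.card : ℤ) = ∑ _C ∈ T0, (2 : ℤ) := by rw [Finset.sum_const]; push_cast; ring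
    _ ≤ _ := Finset.sum_le_sum (fun C hC => hW3 C (hT0sub hC))
  have hW4 : 2 * (T1.card : ℤ) + ∑ C ∈ T0, ∑ u ∈ U, (degIn G C u : ℤ)
      ≤ ∑ u ∈ U, (degIn G R u : ℤ) := by
    rw [hAeq]
    have hdisj10 : Disjoint T1 T0 := by
      rw [hT1d, hT0d]
      exact Finset.disjoint_filter_filter_not TT TT hitC
    have hsubU : T1 ∪ T0 ⊆ comps := Finset.union_subset (hT1sub.trans hTTsub) (hT0sub.trans hTTsub)
    have h1 : ∑ C ∈ T1 ∪ T0, ∑ u ∈ U, (degIn G C u : ℤ) ≤ ∑ C ∈ comps, ∑ u ∈ U, (degIn G C u : ℤ) := by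
      apply Finset.sum_le_sum_of_subset_of_nonneg hsubU
      intro C _ _
      apply Finset.sum_nonneg
      intro u _
      positivity
    rw [Finset.sum_union hdisj10] at h1
    have h2 : 2 * (T1.card : ℤ) ≤ ∑ C ∈ T1, ∑ u ∈ U, (degIn G C u : ℤ) := by
      calc 2 * (T1.card : ℤ) = ∑ _C ∈ T1, (2 : ℤ) := by rw [Finset.sum_const]; push_cast; ring
      _ ≤ _ := Finset.sum_le_sum (fun C hC => hW3 C (hT1sub hC))
    linarith
  -- global identities
  have hcardB : (B.card : ℤ) = U.card + R.card := by
    rw [← hBUR, Finset.card_union_of_disjoint hdisj]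
    push_cast; ring
  have hEB : (edgesIn G B : ℤ) = edgesIn G U + edgesIn G R + ∑ u ∈ U, (degIn G R u : ℤ) := by
    rw [← hBUR, edgesIn_union G hdisj]
    push_cast; ring
  have hdegB : ∑ u ∈ U, ((degIn G B u : ℤ) - 1)
      = 2 * (edgesIn G U : ℤ) + ∑ u ∈ U, (degIn G R u : ℤ) - U.card := by
    have h1 : ∀ u ∈ U, (degIn G B u : ℤ) = degIn G U u + degIn G R u := by
      intro u _
      rw [← hBUR, degIn_union G hdisj]
      push_cast; ring
    rw [Finset.sum_congr rfl (fun u hu => by rw [h1 u hu])]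
    rw [Finset.sum_sub_distrib, Finset.sum_add_distrib, Finset.sum_const]
    have h2 : ∑ u ∈ U, (degIn G U u : ℤ) = 2 * edgesIn G U := by
      exact_mod_cast sum_degIn G U
    rw [h2]
    push_cast
    ring
  -- eR - |R| ≥ -|TT|
  have hERcard : (edgesIn G R : ℤ) - R.card ≥ -(TT.card : ℤ) := by
    have hE : edgesIn G R = ∑ C ∈ comps, edgesIn G (R ∩ C) := edgesIn_comp_partition G (Finset.Subset.refl R)
    have hN : R.card = ∑ C ∈ comps, (R ∩ C).card := card_comp_partition G (Finset.Subset.refl R)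
    have hRC : ∀ C ∈ comps, R ∩ C = C := fun C hC => Finset.inter_eq_right.mpr (comp_subset G hC)
    have hE' : (edgesIn G R : ℤ) = ∑ C ∈ comps, (edgesIn G C : ℤ) := by
      rw [hE]; push_cast
      exact Finset.sum_congr rfl (fun C hC => by rw [hRC C hC])
    have hN' : (R.card : ℤ) = ∑ C ∈ comps, (C.card : ℤ) := by
      rw [hN]; push_cast
      exact Finset.sum_congr rfl (fun C hC => by rw [hRC C hC])
    have hper : ∀ C ∈ comps, (if C ∈ TT then (-1 : ℤ) else 0) ≤ (edgesIn G C : ℤ) - C.card := by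
      intro C hC
      by_cases hCT : C ∈ TT
      · rw [if_pos hCT]
        obtain ⟨v, hv⟩ := comp_nonempty G hC
        have := exc_le_comp G hC (Finset.singleton_subset_iff.mpr hv) ⟨v, Finset.mem_singleton_self v⟩
        rw [edgesIn_singleton] at this
        simp at this
        omega
      · rw [if_neg hCT]
        have : ¬ edgesIn G C < C.card := fun h => hCT (Finset.mem_filter.mpr ⟨hC, h⟩)
        omega
    have hsum := Finset.sum_le_sum hper
    have hite : ∑ C ∈ comps, (if C ∈ TT then (-1 : ℤ) else 0) = -(TT.card : ℤ) := by
      rw [Finset.sum_ite, Finset.sum_const_zero, add_zero, Finset.sum_const]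
      have hfil : comps.filter (· ∈ TT) = TT := by
        rw [Finset.filter_mem_eq_inter]
        exact Finset.inter_eq_right.mpr hTTsub
      rw [hfil]
      simp
    rw [hite] at hsum
    rw [Finset.sum_sub_distrib] at hsum
    rw [hE', hN']
    linarith
  -- final assembly
  have hTsplit : (T1.card : ℤ) + T0.card = TT.card := by
    have := Finset.card_filter_add_card_filter_not (s := TT) (p := hitC)
    rw [hT1d, hT0d]
    exact_mod_cast this
  have heU : (0 : ℤ) ≤ edgesIn G U := by positivity
  rw [hdegB]
  linarith [hW1sum, hW2, hA02, hW4, hA0swap, hERcard, hEB, hcardB, hTsplit, heU]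
end Chunk3

section Chunk4
variable [Fintype V] (G : SimpleGraph V)

lemma goodF_empty : GoodF G ∅ := by
  intro T hT
  rw [Finset.subset_empty.mp hT]
  simp [edgesIn_empty]

/-- Maximal subset of `A` inducing minimum degree at least 2. -/
noncomputable def core2 (A : Finset V) : Finset V :=
  (A.powerset.filter (fun B => ∀ v ∈ B, 2 ≤ degIn G B v)).sup id

lemma core2_subset (A : Finset V) : core2 G A ⊆ A := by
  intro v hv
  obtain ⟨B, hB, hvB⟩ := Finset.mem_sup.mp hv
  exact Finset.mem_powerset.mp (Finset.mem_filter.mp hB).1 hvB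

lemma subset_core2 {A B : Finset V} (hBA : B ⊆ A) (h : ∀ v ∈ B, 2 ≤ degIn G B v) :
    B ⊆ core2 G A := by
  intro v hv
  exact Finset.mem_sup.mpr ⟨B, Finset.mem_filter.mpr ⟨Finset.mem_powerset.mpr hBA, h⟩, hv⟩

lemma core2_mindeg (A : Finset V) : ∀ v ∈ core2 G A, 2 ≤ degIn G (core2 G A) v := by
  intro v hv
  obtain ⟨B, hB, hvB⟩ := Finset.mem_sup.mp hv
  obtain ⟨hBA, hdeg⟩ := Finset.mem_filter.mp hB
  have h2 := hdeg v hvB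
  have hsub : B ⊆ core2 G A := subset_core2 G (Finset.mem_powerset.mp hBA) hdeg
  exact le_trans h2 (degIn_mono G hsub v)

lemma core2_excess {A : Finset V} (h : ¬ GoodF G A) :
    (1 : ℤ) ≤ (edgesIn G (core2 G A) : ℤ) - (core2 G A).card := by
  obtain ⟨T, hTA, hTviol, hTdeg⟩ := exists_min_violator G h
  have hTB : T ⊆ core2 G A := subset_core2 G hTA hTdeg
  set B2 := core2 G A with hB2
  have hdisj : Disjoint T (B2 \ T) := Finset.disjoint_sdiff
  have hunion : T ∪ (B2 \ T) = B2 := Finset.union_sdiff_of_subset hTB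
  have hsplit : edgesIn G B2 = edgesIn G T + edgesIn G (B2 \ T) + ∑ u ∈ T, degIn G (B2 \ T) u := by
    conv_lhs => rw [← hunion]
    rw [edgesIn_union G hdisj]
  have hcard : B2.card = T.card + (B2 \ T).card := by
    conv_lhs => rw [← hunion]
    rw [Finset.card_union_of_disjoint hdisj]
  -- min degree count on B2 \ T
  have hdegsum : 2 * (B2 \ T).card ≤ ∑ v ∈ B2 \ T, degIn G T v + 2 * edgesIn G (B2 \ T) := by
    have h1 : ∀ v ∈ B2 \ T, 2 ≤ degIn G T v + degIn G (B2 \ T) v := by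
      intro v hv
      have := core2_mindeg G A v (Finset.mem_sdiff.mp hv).1
      rw [← hB2, ← hunion, degIn_union G hdisj] at this
      exact this
    have h2 : 2 * (B2 \ T).card ≤ ∑ v ∈ B2 \ T, (degIn G T v + degIn G (B2 \ T) v) := by
      calc 2 * (B2 \ T).card = ∑ _v ∈ B2 \ T, 2 := by rw [Finset.sum_const, smul_eq_mul, mul_comm]
      _ ≤ _ := Finset.sum_le_sum h1
    rw [Finset.sum_add_distrib, sum_degIn] at h2
    exact h2
  have hcomm : ∑ v ∈ B2 \ T, degIn G T v = ∑ u ∈ T, degIn G (B2 \ T) u :=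
    sum_degIn_comm G (B2 \ T) T
  rw [hcomm] at hdegsum
  have : (T.card : ℤ) + 1 ≤ edgesIn G T := by exact_mod_cast hTviol
  have h1 : ((B2 \ T).card : ℤ) ≤ edgesIn G (B2 \ T) + ∑ u ∈ T, degIn G (B2 \ T) u := by
    have : (2 : ℤ) * (B2 \ T).card ≤ (∑ u ∈ T, degIn G (B2 \ T) u : ℕ) + 2 * edgesIn G (B2 \ T) := by
      exact_mod_cast hdegsum
    have hnn : (0 : ℤ) ≤ ∑ u ∈ T, ((degIn G (B2 \ T) u : ℤ)) := by positivity
    push_cast at this ⊢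
    linarith
  have h2 : (edgesIn G B2 : ℤ) = edgesIn G T + edgesIn G (B2 \ T) + (∑ u ∈ T, degIn G (B2 \ T) u : ℕ) := by
    exact_mod_cast hsplit
  have h3 : (B2.card : ℤ) = T.card + (B2 \ T).card := by exact_mod_cast hcard
  push_cast at h1 h2 h3 this ⊢
  linarith

lemma exists_minimal_sub {A : Finset V} :
    ∀ (U : Finset V), U ⊆ A → GoodF G (A \ U) →
      ∃ U', U' ⊆ U ∧ GoodF G (A \ U') ∧ ∀ u ∈ U', ¬ GoodF G ((A \ U') ∪ {u}) := by
  intro U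
  induction U using Finset.strongInduction with
  | _ U ih =>
    intro hUA hgood
    by_cases hmin : ∀ u ∈ U, ¬ GoodF G ((A \ U) ∪ {u})
    · exact ⟨U, Finset.Subset.refl U, hgood, hmin⟩
    · push_neg at hmin
      obtain ⟨u, huU, hgood'⟩ := hmin
      have heq : A \ (U.erase u) = (A \ U) ∪ {u} := by
        ext v
        simp only [Finset.mem_sdiff, Finset.mem_erase, Finset.mem_union, Finset.mem_singleton]
        constructor
        · rintro ⟨hvA, hv⟩
          by_cases hvu : v = u
          · right; exact hvu
          · left; exact ⟨hvA, fun hvU => hv ⟨hvu, hvU⟩⟩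
        · rintro (⟨hvA, hvU⟩ | rfl)
          · exact ⟨hvA, fun h => hvU h.2⟩
          · exact ⟨hUA huU, fun h => h.1 rfl⟩
      obtain ⟨U', hU'sub, hU'good, hU'min⟩ :=
        ih (U.erase u) (Finset.erase_ssubset huU) ((Finset.erase_subset u U).trans hUA)
          (by rw [heq]; exact hgood')
      exact ⟨U', hU'sub.trans (Finset.erase_subset u U), hU'good, hU'min⟩

theorem coreRec (x : V → ℝ) (hx : PWD G x) :
    ∀ (n : ℕ) (A : Finset V) (c : V → ℝ), (∀ u, 0 ≤ c u) →
      A.card + (A.filter (fun v => c v ≠ 0)).card ≤ n →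
      ∃ U, U ⊆ A ∧ GoodF G (A \ U) ∧ (∀ u ∈ U, ¬ GoodF G ((A \ U) ∪ {u})) ∧
        ∑ u ∈ U, c u ≤ 3 * ∑ u ∈ A, c u * x u := by
  intro n
  induction n with
  | zero =>
    intro A c hc hn
    have hA : A = ∅ := Finset.card_eq_zero.mp (by omega)
    subst hA
    refine ⟨∅, Finset.Subset.refl _, by simpa using goodF_empty G, by simp, by simp⟩
  | succ n ih =>
    intro A c hc hn
    have hxnn : ∀ u, 0 ≤ x u := hx.1
    by_cases hG : GoodF G A
    · refine ⟨∅, Finset.empty_subset _, by simpa using hG, by simp, ?_⟩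
      rw [Finset.sum_empty]
      have : 0 ≤ ∑ u ∈ A, c u * x u :=
        Finset.sum_nonneg (fun u _ => mul_nonneg (hc u) (hxnn u))
      linarith
    by_cases hz : ∃ v ∈ A, c v = 0
    · obtain ⟨v, hvA, hcv⟩ := hz
      have hApos : 0 < A.card := Finset.card_pos.mpr ⟨v, hvA⟩
      have hmeas : (A.erase v).card + ((A.erase v).filter (fun u => c u ≠ 0)).card ≤ n := by
        have h1 : (A.erase v).card = A.card - 1 := Finset.card_erase_of_mem hvA
        have h2 : ((A.erase v).filter (fun u => c u ≠ 0)).card ≤ (A.filter (fun u => c u ≠ 0)).card :=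
          Finset.card_le_card (Finset.filter_subset_filter _ (Finset.erase_subset v A))
        omega
      obtain ⟨U'', hsub, hgood, _, hcost⟩ := ih (A.erase v) c hc hmeas
      have hins : insert v U'' ⊆ A := by
        apply Finset.insert_subset hvA (hsub.trans (Finset.erase_subset v A))
      have hgood1 : GoodF G (A \ insert v U'') := by
        have heq : A \ insert v U'' = (A.erase v) \ U'' := by
          ext w
          simp only [Finset.mem_sdiff, Finset.mem_insert, Finset.mem_erase]
          tauto
        rw [heq]; exact hgood
      obtain ⟨U, hUsub, hUgood, hUmin⟩ := exists_minimal_sub G (insert v U'') hins hgood1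
      refine ⟨U, hUsub.trans hins, hUgood, hUmin, ?_⟩
      have h1 : ∑ u ∈ U, c u ≤ ∑ u ∈ insert v U'', c u :=
        Finset.sum_le_sum_of_subset_of_nonneg hUsub (fun u _ _ => hc u)
      have h2 : ∑ u ∈ insert v U'', c u ≤ ∑ u ∈ U'', c u := by
        by_cases hvU : v ∈ U''
        · rw [Finset.insert_eq_self.mpr hvU]
        · rw [Finset.sum_insert hvU, hcv, zero_add]
      have h3 : ∑ u ∈ A.erase v, c u * x u ≤ ∑ u ∈ A, c u * x u :=
        Finset.sum_le_sum_of_subset_of_nonneg (Finset.erase_subset v A)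
          (fun u _ _ => mul_nonneg (hc u) (hxnn u))
      linarith
    · -- all costs positive on A
      push_neg at hz
      set B2 := core2 G A with hB2
      have hB2A : B2 ⊆ A := core2_subset G A
      have hndeg := core2_mindeg G A
      have hF1 : (1 : ℤ) ≤ (edgesIn G B2 : ℤ) - B2.card := core2_excess G hG
      obtain ⟨T, hTA, hTviol, hTdeg⟩ := exists_min_violator G hG
      have hTne : T.Nonempty := by
        rcases Finset.eq_empty_or_nonempty T with rfl | h
        · rw [edgesIn_empty] at hTviol; omega
        · exact h
      have hB2ne : B2.Nonempty := by
        obtain ⟨v, hv⟩ := hTne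
        exact ⟨v, subset_core2 G hTA hTdeg hv⟩
      set w : V → ℝ := fun v => if v ∈ B2 then (degIn G B2 v : ℝ) - 1 else 0 with hw
      have hw1 : ∀ v ∈ B2, 1 ≤ w v := by
        intro v hvB
        rw [hw]
        simp only [if_pos hvB]
        have := hndeg v hvB
        have : (2 : ℝ) ≤ (degIn G B2 v : ℝ) := by exact_mod_cast this
        linarith
      obtain ⟨u0, hu0B, hu0min⟩ := Finset.exists_min_image B2 (fun v => c v / w v) hB2ne
      have hwu0 : 0 < w u0 := lt_of_lt_of_le zero_lt_one (hw1 u0 hu0B)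
      have hcu0 : 0 < c u0 := lt_of_le_of_ne (hc u0) (Ne.symm (hz u0 (hB2A hu0B)))
      set ε := c u0 / w u0 with hε
      have hεpos : 0 < ε := div_pos hcu0 hwu0
      set c' : V → ℝ := fun v => c v - ε * w v with hc'def
      have hc' : ∀ v, 0 ≤ c' v := by
        intro v
        rw [hc'def]
        by_cases hvB : v ∈ B2
        · have hwv : 0 < w v := lt_of_lt_of_le zero_lt_one (hw1 v hvB)
          have hle : ε ≤ c v / w v := hu0min v hvB
          have : ε * w v ≤ (c v / w v) * w v := mul_le_mul_of_nonneg_right hle (le_of_lt hwv)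
          rw [div_mul_cancel₀ _ (ne_of_gt hwv)] at this
          simp only []
          linarith
        · have : w v = 0 := by rw [hw]; simp [hvB]
          simp only [this, mul_zero, sub_zero]
          exact hc v
      have hc'u0 : c' u0 = 0 := by
        rw [hc'def]
        simp only [hε]
        rw [div_mul_cancel₀ _ (ne_of_gt hwu0)]
        ring
      have hmeas : A.card + (A.filter (fun v => c' v ≠ 0)).card ≤ n := by
        have hAeq : A.filter (fun v => c v ≠ 0) = A :=
          Finset.filter_true_of_mem (fun v hv => hz v hv)
        have hsub : A.filter (fun v => c' v ≠ 0) ⊆ A.erase u0 := by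
          intro v hv
          obtain ⟨hvA, hvne⟩ := Finset.mem_filter.mp hv
          refine Finset.mem_erase.mpr ⟨?_, hvA⟩
          rintro rfl
          exact hvne hc'u0
        have h1 : (A.filter (fun v => c' v ≠ 0)).card ≤ A.card - 1 := by
          calc (A.filter (fun v => c' v ≠ 0)).card ≤ (A.erase u0).card := Finset.card_le_card hsub
          _ = A.card - 1 := Finset.card_erase_of_mem (hB2A hu0B)
        have hApos : 0 < A.card := Finset.card_pos.mpr ⟨u0, hB2A hu0B⟩
        rw [hAeq] at hn
        omega
      obtain ⟨U, hUA, hgood, hmin, hcost'⟩ := ih A c' hc' hmeas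
      refine ⟨U, hUA, hgood, hmin, ?_⟩
      -- apply lemmaStar to B2, U ∩ B2
      have hUB2sub : U ∩ B2 ⊆ B2 := Finset.inter_subset_right
      have hgoodB2 : GoodF G (B2 \ (U ∩ B2)) := by
        apply goodF_subset G hgood
        intro v hv
        obtain ⟨hvB, hvnU⟩ := Finset.mem_sdiff.mp hv
        exact Finset.mem_sdiff.mpr ⟨hB2A hvB, fun hvU => hvnU (Finset.mem_inter.mpr ⟨hvU, hvB⟩)⟩
      have hwitB2 : ∀ u ∈ U ∩ B2, ∃ T', T' ⊆ (B2 \ (U ∩ B2)) ∪ {u} ∧ T'.card + 1 ≤ edgesIn G T' := by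
        intro u huUB
        obtain ⟨huU, huB⟩ := Finset.mem_inter.mp huUB
        have hng : ¬ GoodF G ((A \ U) ∪ {u}) := hmin u huU
        obtain ⟨T', hT'sub, hT'viol, hT'deg⟩ := exists_min_violator G hng
        have hT'A : T' ⊆ A := hT'sub.trans (by
          apply Finset.union_subset Finset.sdiff_subset
          simp [hUA huU, hB2A huB])
        have hT'B2 : T' ⊆ B2 := subset_core2 G hT'A hT'deg
        refine ⟨T', ?_, hT'viol⟩
        intro v hv
        rcases Finset.mem_union.mp (hT'sub hv) with h | h
        · obtain ⟨hvA, hvnU⟩ := Finset.mem_sdiff.mp h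
          exact Finset.mem_union_left _ (Finset.mem_sdiff.mpr
            ⟨hT'B2 hv, fun hvi => hvnU (Finset.mem_inter.mp hvi).1⟩)
        · exact Finset.mem_union_right _ h
      have hstar := lemmaStar G hUB2sub hndeg hgoodB2 hwitB2
      -- convert to ℝ
      have hstarR : ∑ u ∈ U ∩ B2, ((degIn G B2 u : ℝ) - 1)
          ≤ 3 * ((edgesIn G B2 : ℝ) - B2.card) := by exact_mod_cast hstar
      have hsumw : ∑ u ∈ U, w u = ∑ u ∈ U ∩ B2, ((degIn G B2 u : ℝ) - 1) := by
        rw [hw]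
        rw [Finset.sum_ite_mem]
      have hLP : ((edgesIn G B2 : ℝ) - B2.card) ≤ ∑ u ∈ B2, ((degIn G B2 u : ℝ) - 1) * x u :=
        hx.2 B2
      have hwx : ∑ u ∈ A, w u * x u = ∑ u ∈ B2, ((degIn G B2 u : ℝ) - 1) * x u := by
        rw [hw]
        have : ∀ u ∈ A, (if u ∈ B2 then (degIn G B2 u : ℝ) - 1 else 0) * x u
            = (if u ∈ B2 then ((degIn G B2 u : ℝ) - 1) * x u else 0) := by
          intro u _
          split <;> simp
        rw [Finset.sum_congr rfl this, Finset.sum_ite_mem]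
        congr 1
        exact Finset.inter_eq_right.mpr hB2A
      have hceq : ∀ v, c v = c' v + ε * w v := by
        intro v
        rw [hc'def]
        ring
      have hsumc : ∑ u ∈ U, c u = ∑ u ∈ U, c' u + ε * ∑ u ∈ U, w u := by
        rw [Finset.sum_congr rfl (fun u _ => hceq u), Finset.sum_add_distrib, Finset.mul_sum]
      have hsumA : ∑ u ∈ A, c u * x u = ∑ u ∈ A, c' u * x u + ε * ∑ u ∈ A, w u * x u := by
        rw [Finset.mul_sum, ← Finset.sum_add_distrib]
        apply Finset.sum_congr rfl
        intro u _
        rw [hceq u]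
        ring
      have hF1R : (1 : ℝ) ≤ (edgesIn G B2 : ℝ) - B2.card := by exact_mod_cast hF1
      have hεw : ε * ∑ u ∈ U, w u ≤ ε * (3 * ((edgesIn G B2 : ℝ) - B2.card)) := by
        apply mul_le_mul_of_nonneg_left _ (le_of_lt hεpos)
        rw [hsumw]; exact hstarR
      have hεLP : ε * (3 * ((edgesIn G B2 : ℝ) - B2.card))
          ≤ ε * (3 * ∑ u ∈ B2, ((degIn G B2 u : ℝ) - 1) * x u) := by
        apply mul_le_mul_of_nonneg_left _ (le_of_lt hεpos)
        linarith
      rw [hsumc, hsumA]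
      rw [hwx]
      linarith
end Chunk4

section Chunk5
variable [Fintype V] (G : SimpleGraph V)

lemma isPseudoforest_of_good {W : Type*} [Fintype W] (H : SimpleGraph W) (f : W → V)
    (hfinj : Function.Injective f) (hadj : ∀ a b, H.Adj a b → G.Adj (f a) (f b))
    (hgood : ∀ T : Finset V, T ⊆ Finset.univ.image f → edgesIn G T ≤ T.card) :
    IsPseudoforest H := by
  intro C
  set VC := Finset.univ.filter (fun w : W => H.connectedComponentMk w = C) with hVC
  set TC := VC.image f with hTCdef
  have hcard : TC.card = VC.card := Finset.card_image_of_injective _ hfinj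
  have hTCsub : TC ⊆ Finset.univ.image f := by
    intro v hv
    obtain ⟨w, _, rfl⟩ := Finset.mem_image.mp hv
    exact Finset.mem_image_of_mem _ (Finset.mem_univ w)
  have hmapmem : ∀ e ∈ H.edgeFinset.filter
      (fun e => ∀ v ∈ e, H.connectedComponentMk v = C),
      Sym2.map f e ∈ G.edgeFinset.filter (fun e => ∀ v ∈ e, v ∈ TC) := by
    intro e he
    obtain ⟨heE, hall⟩ := Finset.mem_filter.mp he
    induction e with
    | _ a b =>
      have hadj' : H.Adj a b := SimpleGraph.mem_edgeFinset.mp heE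
      have hGadj : G.Adj (f a) (f b) := hadj a b hadj'
      rw [Sym2.map_pair_eq]
      refine Finset.mem_filter.mpr ⟨SimpleGraph.mem_edgeFinset.mpr hGadj, ?_⟩
      intro v hv
      have hamem : a ∈ VC :=
        Finset.mem_filter.mpr ⟨Finset.mem_univ _, hall a (Sym2.mem_mk_left a b)⟩
      have hbmem : b ∈ VC :=
        Finset.mem_filter.mpr ⟨Finset.mem_univ _, hall b (Sym2.mem_mk_right a b)⟩
      rcases Sym2.mem_iff.mp hv with rfl | rfl
      · exact Finset.mem_image_of_mem _ hamem
      · exact Finset.mem_image_of_mem _ hbmem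
  have hinj : Set.InjOn (Sym2.map f)
      ↑(H.edgeFinset.filter (fun e => ∀ v ∈ e, H.connectedComponentMk v = C)) :=
    fun e₁ _ e₂ _ hx => Sym2.map.injective hfinj hx
  calc (H.edgeFinset.filter (fun e => ∀ v ∈ e, H.connectedComponentMk v = C)).card
      ≤ (G.edgeFinset.filter (fun e => ∀ v ∈ e, v ∈ TC)).card :=
        Finset.card_le_card_of_injOn _ hmapmem hinj
    _ = edgesIn G TC := rfl
    _ ≤ TC.card := hgood TC hTCsub
    _ = VC.card := hcard

lemma goodF_isPFDS {U : Finset V} (h : GoodF G (Finset.univ \ U)) : IsPFDS G U := by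
  apply isPseudoforest_of_good G (G.induce {v : V | v ∉ U}) (Subtype.val)
    Subtype.val_injective
  · intro a b hab
    simpa using hab
  · intro T hT
    apply h T
    intro v hv
    have := hT hv
    obtain ⟨w, _, rfl⟩ := Finset.mem_image.mp this
    exact Finset.mem_sdiff.mpr ⟨Finset.mem_univ _, w.2⟩

end Chunk5

end Development
end FVS

namespace FVS

/-- the integrality gap of the LP relaxation
`min {Σ c_u x_u : x ∈ P_WD(G)}` of PFDS is at most `3`: for every `x ∈ P_WD(G)` there
is a pseudoforest deletion set `U` with `Σ_{u ∈ U} c(u) ≤ 3 Σ_{u ∈ V} c(u) x_u`. -/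
theorem stmt_13 {V : Type*} [Fintype V] (G : SimpleGraph V)
    (c : V → ℝ) (hc : ∀ u, 0 ≤ c u) (x : V → ℝ) (hx : PWD G x) :
    ∃ U : Finset V, IsPFDS G U ∧ ∑ u ∈ U, c u ≤ 3 * ∑ u, c u * x u := by
  obtain ⟨U, hUuniv, hgood, hmin, hcost⟩ := coreRec G x hx
    (Finset.univ.card + (Finset.univ.filter (fun v => c v ≠ 0)).card) Finset.univ c hc le_rfl
  exact ⟨U, goodF_isPFDS G hgood, hcost⟩

end FVS
end

section
/- Let G=(V,E) be a finite undirected graph and let x ∈ ℝ^V satisfy x_u < 1/2 for all u ∈ V. Then the set function f_x : 2^V → ℝ defined by f_x(S) := |E[S]| − |S| − Σ_{u∈S}(d_S(u) − 1)x_u is supermodular, i.e., f_x(A) + f_x(B) ≤ f_x(A∩B) + f_x(A∪B) for all A, B ⊆ V. -/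
/- Common definitions for the polyhedral study of FVS / PFDS. -/

open scoped Classical
open Finset

namespace FVS

section Aux

variable {V : Type*} [Fintype V]

/-- The graph `G` restricted to edges with both endpoints in `S`. -/
private def auxGraph (G : SimpleGraph V) (S : Finset V) : SimpleGraph V where
  Adj u v := G.Adj u v ∧ u ∈ S ∧ v ∈ S
  symm := ⟨by rintro u v ⟨h, hu, hv⟩; exact ⟨h.symm, hv, hu⟩⟩
  loopless := ⟨by rintro u ⟨h, _, _⟩; exact (G.ne_of_adj h) rfl⟩

private lemma auxGraph_edgeFinset_card (G : SimpleGraph V) (S : Finset V) :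
    (auxGraph G S).edgeFinset.card = edgesIn G S := by
  unfold edgesIn
  congr 1
  ext e
  induction e using Sym2.ind with
  | _ a b =>
    rw [Finset.mem_filter, SimpleGraph.mem_edgeFinset, SimpleGraph.mem_edgeFinset,
      SimpleGraph.mem_edgeSet, SimpleGraph.mem_edgeSet]
    simp only [auxGraph]
    constructor
    · rintro ⟨h, ha, hb⟩
      refine ⟨h, ?_⟩
      intro v hv
      rcases Sym2.mem_iff.mp hv with rfl | rfl <;> assumption
    · rintro ⟨h, hall⟩
      exact ⟨h, hall a (Sym2.mem_mk_left a b), hall b (Sym2.mem_mk_right a b)⟩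

private lemma auxGraph_degree (G : SimpleGraph V) (S : Finset V) {u : V} (hu : u ∈ S) :
    (auxGraph G S).degree u = degIn G S u := by
  unfold SimpleGraph.degree degIn
  congr 1
  ext v
  rw [SimpleGraph.mem_neighborFinset]
  simp only [auxGraph, Finset.mem_filter]
  tauto

private lemma auxGraph_degree_notMem (G : SimpleGraph V) (S : Finset V) {u : V} (hu : u ∉ S) :
    (auxGraph G S).degree u = 0 := by
  unfold SimpleGraph.degree
  rw [Finset.card_eq_zero]
  ext v
  rw [SimpleGraph.mem_neighborFinset]
  simp only [auxGraph, Finset.notMem_empty, iff_false]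
  rintro ⟨_, hmem, _⟩
  exact hu hmem

private lemma handshake (G : SimpleGraph V) (S : Finset V) :
    2 * edgesIn G S = ∑ u ∈ S, degIn G S u := by
  rw [← auxGraph_edgeFinset_card, ← SimpleGraph.sum_degrees_eq_twice_card_edges]
  rw [← Finset.sum_subset (Finset.subset_univ S)
    (fun u _ hu => auxGraph_degree_notMem G S hu)]
  exact Finset.sum_congr rfl fun u hu => auxGraph_degree G S hu

private lemma fWD_eq (G : SimpleGraph V) (x : V → ℝ) (S : Finset V) :
    fWD G x S =
      (∑ u ∈ S, ∑ v ∈ S, (if G.Adj u v then (1 - x u - x v) / 2 else 0))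
        + ∑ u ∈ S, (x u - 1) := by
  have hS1 : ∑ u ∈ S, ∑ v ∈ S, (if G.Adj u v then (1:ℝ) else 0)
      = 2 * (edgesIn G S : ℝ) := by
    have : ∀ u ∈ S, ∑ v ∈ S, (if G.Adj u v then (1:ℝ) else 0) = (degIn G S u : ℝ) := by
      intro u _
      rw [Finset.sum_boole]
      rfl
    rw [Finset.sum_congr rfl this]
    rw [← Nat.cast_sum, ← handshake]
    push_cast; ring
  have hS2 : ∑ u ∈ S, ∑ v ∈ S, (if G.Adj u v then x u else 0)
      = ∑ u ∈ S, (degIn G S u : ℝ) * x u := by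
    refine Finset.sum_congr rfl fun u _ => ?_
    rw [← Finset.sum_filter, Finset.sum_const, nsmul_eq_mul]
    rfl
  have hS3 : ∑ u ∈ S, ∑ v ∈ S, (if G.Adj u v then x v else 0)
      = ∑ u ∈ S, (degIn G S u : ℝ) * x u := by
    rw [Finset.sum_comm]
    refine Finset.sum_congr rfl fun v _ => ?_
    have : ∀ u ∈ S, (if G.Adj u v then x v else 0) = (if G.Adj v u then x v else 0) := by
      intro u _; rw [SimpleGraph.adj_comm]
    rw [Finset.sum_congr rfl this, ← Finset.sum_filter, Finset.sum_const, nsmul_eq_mul]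
    rfl
  have hsplit : ∑ u ∈ S, ∑ v ∈ S, (if G.Adj u v then (1 - x u - x v) / 2 else 0)
      = ((∑ u ∈ S, ∑ v ∈ S, (if G.Adj u v then (1:ℝ) else 0))
        - (∑ u ∈ S, ∑ v ∈ S, (if G.Adj u v then x u else 0))
        - (∑ u ∈ S, ∑ v ∈ S, (if G.Adj u v then x v else 0))) / 2 := by
    rw [← Finset.sum_sub_distrib, ← Finset.sum_sub_distrib, Finset.sum_div]
    refine Finset.sum_congr rfl fun u _ => ?_
    rw [← Finset.sum_sub_distrib, ← Finset.sum_sub_distrib, Finset.sum_div]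
    refine Finset.sum_congr rfl fun v _ => ?_
    by_cases h : G.Adj u v <;> simp [h]
  rw [hsplit, hS1, hS2, hS3]
  unfold fWD
  rw [Finset.sum_sub_distrib]
  have : ∑ u ∈ S, ((degIn G S u : ℝ) - 1) * x u
      = ∑ u ∈ S, (degIn G S u : ℝ) * x u - ∑ u ∈ S, x u := by
    rw [← Finset.sum_sub_distrib]
    refine Finset.sum_congr rfl fun u _ => by ring
  rw [this]
  simp only [Finset.sum_const, nsmul_eq_mul, mul_one]
  ring

end Aux

/-- if `x_u < 1/2` for all `u ∈ V`, then the set function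
`f_x(S) = |E[S]| - |S| - Σ_{u ∈ S} (d_S(u) - 1) x_u` is supermodular. -/
theorem stmt_16 {V : Type*} [Fintype V] (G : SimpleGraph V)
    (x : V → ℝ) (hx : ∀ u, x u < 1 / 2) (A B : Finset V) :
    fWD G x A + fWD G x B ≤ fWD G x (A ∩ B) + fWD G x (A ∪ B) := by
  classical
  set w : V → V → ℝ := fun u v => if G.Adj u v then (1 - x u - x v) / 2 else 0 with hw
  have hwnn : ∀ u v, 0 ≤ w u v := by
    intro u v
    by_cases h : G.Adj u v
    · simp only [hw, h, if_true]
      have := hx u; have := hx v; linarith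
    · simp [hw, h]
  set χ : Finset V → V → ℝ := fun S u => if u ∈ S then 1 else 0 with hχ
  have expand : ∀ S : Finset V,
      ∑ u ∈ S, ∑ v ∈ S, w u v = ∑ u, ∑ v, χ S u * χ S v * w u v := by
    intro S
    rw [Finset.sum_comm]
    symm
    rw [Finset.sum_comm (s := Finset.univ)]
    calc ∑ v, ∑ u, χ S u * χ S v * w u v
        = ∑ v, χ S v * ∑ u, χ S u * w u v := by
          refine Finset.sum_congr rfl fun v _ => ?_
          rw [Finset.mul_sum]
          exact Finset.sum_congr rfl fun u _ => by ring
      _ = ∑ v ∈ S, ∑ u, χ S u * w u v := by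
          simp only [hχ, ite_mul, one_mul, zero_mul]
          rw [Finset.sum_ite_mem, Finset.univ_inter]
      _ = ∑ v ∈ S, ∑ u ∈ S, w u v := by
          refine Finset.sum_congr rfl fun v _ => ?_
          simp only [hχ, ite_mul, one_mul, zero_mul]
          rw [Finset.sum_ite_mem, Finset.univ_inter]
  have hpair : ∑ u ∈ A, ∑ v ∈ A, w u v + ∑ u ∈ B, ∑ v ∈ B, w u v
      ≤ ∑ u ∈ A ∩ B, ∑ v ∈ A ∩ B, w u v + ∑ u ∈ A ∪ B, ∑ v ∈ A ∪ B, w u v := by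
    rw [expand A, expand B, expand (A ∩ B), expand (A ∪ B),
      ← Finset.sum_add_distrib, ← Finset.sum_add_distrib]
    refine Finset.sum_le_sum fun u _ => ?_
    rw [← Finset.sum_add_distrib, ← Finset.sum_add_distrib]
    refine Finset.sum_le_sum fun v _ => ?_
    have := hwnn u v
    by_cases hua : u ∈ A <;> by_cases hub : u ∈ B <;>
      by_cases hva : v ∈ A <;> by_cases hvb : v ∈ B <;>
      simp [hχ, hua, hub, hva, hvb, Finset.mem_inter, Finset.mem_union] <;> linarith
  have hmod : ∑ u ∈ A, (x u - 1) + ∑ u ∈ B, (x u - 1)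
      = ∑ u ∈ A ∩ B, (x u - 1) + ∑ u ∈ A ∪ B, (x u - 1) := by
    rw [add_comm (∑ u ∈ A ∩ B, (x u - 1))]
    exact (Finset.sum_union_inter).symm
  rw [fWD_eq, fWD_eq, fWD_eq, fWD_eq]
  linarith

end FVS
end

section
/- Let G=(V,E) be a finite undirected connected graph with minimum degree at least 2 that contains a 2-pseudotree as a subgraph, and let x ∈ P_WD(G) satisfy x_u < 1/3 for all u ∈ V. Then there exist two distinct vertices u, v ∈ V such that x_u > 0 and x_v > 0. -/
/- Common definitions for the polyhedral study of FVS / PFDS. -/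

open scoped Classical
open Finset

namespace FVS

section Aux

variable {V : Type*} [Fintype V]

/-- The spanning subgraph of `G` keeping only edges inside `S`. -/
private def indG (G : SimpleGraph V) (S : Finset V) : SimpleGraph V where
  Adj a b := a ∈ S ∧ b ∈ S ∧ G.Adj a b
  symm := ⟨fun a b ⟨ha, hb, h⟩ => ⟨hb, ha, h.symm⟩⟩
  loopless := ⟨fun a ⟨_, _, h⟩ => G.loopless.irrefl a h⟩

private lemma indG_adj (G : SimpleGraph V) (S : Finset V) (a b : V) :
    (indG G S).Adj a b ↔ a ∈ S ∧ b ∈ S ∧ G.Adj a b := Iff.rfl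

private lemma indG_edgeFinset (G : SimpleGraph V) (S : Finset V) :
    (indG G S).edgeFinset = G.edgeFinset.filter (fun e => ∀ v ∈ e, v ∈ S) := by
  ext e
  induction e using Sym2.ind with
  | _ a b =>
    simp only [Finset.mem_filter, SimpleGraph.mem_edgeFinset, SimpleGraph.mem_edgeSet,
      Sym2.mem_iff, indG_adj]
    constructor
    · rintro ⟨ha, hb, h⟩; exact ⟨h, by rintro v (rfl | rfl) <;> assumption⟩
    · rintro ⟨h, hm⟩; exact ⟨hm a (Or.inl rfl), hm b (Or.inr rfl), h⟩

private lemma indG_degree_eq (G : SimpleGraph V) (S : Finset V) {v : V} (hv : v ∈ S) :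
    (indG G S).degree v = degIn G S v := by
  unfold degIn
  rw [← SimpleGraph.card_neighborFinset_eq_degree]
  congr 1
  ext w
  simp only [SimpleGraph.mem_neighborFinset, indG_adj, Finset.mem_filter]
  tauto

private lemma sum_degIn_le (G : SimpleGraph V) (S : Finset V) :
    ∑ v ∈ S, degIn G S v ≤ 2 * edgesIn G S := by
  have h1 : ∑ v ∈ S, degIn G S v = ∑ v ∈ S, (indG G S).degree v :=
    Finset.sum_congr rfl (fun v hv => (indG_degree_eq G S hv).symm)
  rw [h1]
  calc ∑ v ∈ S, (indG G S).degree v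
      ≤ ∑ v ∈ Finset.univ, (indG G S).degree v :=
        Finset.sum_le_sum_of_subset (Finset.subset_univ S)
    _ = 2 * (indG G S).edgeFinset.card := SimpleGraph.sum_degrees_eq_twice_card_edges _
    _ = 2 * edgesIn G S := by rw [edgesIn, ← indG_edgeFinset]

private lemma edgesIn_le_erase_add (G : SimpleGraph V) (S : Finset V) (v : V) :
    edgesIn G S ≤ edgesIn G (S.erase v) + degIn G S v := by
  classical
  set F := G.edgeFinset.filter (fun e => ∀ u ∈ e, u ∈ S) with hF
  have hsplit : (F.filter (fun e => v ∈ e)).card + (F.filter (fun e => ¬ v ∈ e)).card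
      = F.card := Finset.card_filter_add_card_filter_not _
  have h1 : (F.filter (fun e => v ∈ e)).card ≤ degIn G S v := by
    by_cases hv : v ∈ S
    · have heq : F.filter (fun e => v ∈ e) = (indG G S).incidenceFinset v := by
        rw [hF, ← indG_edgeFinset]
        ext e
        simp only [Finset.mem_filter, SimpleGraph.mem_incidenceFinset,
          SimpleGraph.incidenceSet, Set.mem_setOf_eq, SimpleGraph.mem_edgeFinset]
      rw [heq, SimpleGraph.card_incidenceFinset_eq_degree, indG_degree_eq G S hv]
    · have : F.filter (fun e => v ∈ e) = ∅ := by
        rw [Finset.eq_empty_iff_forall_notMem]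
        intro e he
        rw [hF, Finset.filter_filter, Finset.mem_filter] at he
        exact hv (he.2.1 v he.2.2)
      simp [this]
  have h2 : (F.filter (fun e => ¬ v ∈ e)).card ≤ edgesIn G (S.erase v) := by
    apply Finset.card_le_card
    intro e he
    rw [hF, Finset.filter_filter, Finset.mem_filter] at he
    rw [Finset.mem_filter]
    refine ⟨he.1, fun u hu => Finset.mem_erase.2 ⟨?_, he.2.1 u hu⟩⟩
    rintro rfl
    exact he.2.2 hu
  calc edgesIn G S = F.card := rfl
    _ = (F.filter (fun e => v ∈ e)).card + (F.filter (fun e => ¬ v ∈ e)).card := hsplit.symm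
    _ ≤ degIn G S v + edgesIn G (S.erase v) := Nat.add_le_add h1 h2
    _ = _ := Nat.add_comm _ _

private lemma exists_dense (G : SimpleGraph V)
    (h2pt : ∃ H : G.Subgraph, H.Connected ∧ H.verts.ncard + 1 ≤ H.edgeSet.ncard) :
    ∃ S : Finset V, S.card + 1 ≤ edgesIn G S := by
  classical
  obtain ⟨H, -, hcard⟩ := h2pt
  refine ⟨H.verts.toFinset, ?_⟩
  have hE : H.edgeSet.toFinset ⊆
      G.edgeFinset.filter (fun e => ∀ v ∈ e, v ∈ H.verts.toFinset) := by
    intro e he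
    rw [Set.mem_toFinset] at he
    rw [Finset.mem_filter, SimpleGraph.mem_edgeFinset]
    exact ⟨H.edgeSet_subset he, fun v hv =>
      Set.mem_toFinset.2 (SimpleGraph.Subgraph.mem_verts_of_mem_edge he hv)⟩
  calc H.verts.toFinset.card + 1 = H.verts.ncard + 1 := by
        rw [Set.ncard_eq_toFinset_card']
    _ ≤ H.edgeSet.ncard := hcard
    _ = H.edgeSet.toFinset.card := Set.ncard_eq_toFinset_card' _
    _ ≤ edgesIn G H.verts.toFinset := Finset.card_le_card hE

end Aux

/-- let `G` be a connected graph with minimum degree at least `2` that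
contains a `2`-pseudotree as a subgraph, and let `x ∈ P_WD(G)` with `x_u < 1/3` for
all `u`.  Then there are two distinct vertices `u, v` with `x_u > 0` and `x_v > 0`. -/
theorem stmt_19 {V : Type*} [Fintype V] (G : SimpleGraph V)
    (hconn : G.Connected) (hdeg : ∀ v, 2 ≤ G.degree v)
    (h2pt : ∃ H : G.Subgraph, H.Connected ∧ H.verts.ncard + 1 ≤ H.edgeSet.ncard)
    (x : V → ℝ) (hx : PWD G x) (hlt : ∀ u, x u < 1 / 3) :
    ∃ u v : V, u ≠ v ∧ 0 < x u ∧ 0 < x v := by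
  classical
  by_contra hcon
  push_neg at hcon
  obtain ⟨hx0, hxS⟩ := hx
  -- all coordinates are zero except possibly one
  have honez : ∀ u v : V, u ≠ v → 0 < x u → x v = 0 := by
    intro u v huv hu
    exact le_antisymm (hcon u v huv hu) (hx0 v)
  obtain ⟨S₀, hS₀⟩ := exists_dense G h2pt
  -- a minimal dense set
  obtain ⟨S, hSmem, hSmin⟩ := Finset.exists_min_image
    (Finset.univ.filter (fun T : Finset V => T.card + 1 ≤ edgesIn G T)) Finset.card
    ⟨S₀, Finset.mem_filter.2 ⟨Finset.mem_univ _, hS₀⟩⟩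
  rw [Finset.mem_filter] at hSmem
  have hdense : S.card + 1 ≤ edgesIn G S := hSmem.2
  have hs1 : 1 ≤ S.card := by
    rcases Nat.eq_zero_or_pos S.card with h | h
    · exfalso
      rw [Finset.card_eq_zero] at h
      subst h
      have : edgesIn G (∅ : Finset V) = 0 := by
        rw [edgesIn, Finset.card_eq_zero, Finset.eq_empty_iff_forall_notMem]
        intro e he
        rw [Finset.mem_filter] at he
        induction e using Sym2.ind with
        | _ a b => exact absurd (he.2 a (Sym2.mem_mk_left a b)) (Finset.notMem_empty a)
      omega
    · exact h
  set s := S.card with hsdef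
  set eS := edgesIn G S with hedef
  set t := eS - s with htdef
  have het : eS = s + t := by omega
  have ht1 : 1 ≤ t := by omega
  -- degree lower bound from minimality
  have hdeglb : ∀ v ∈ S, t + 1 ≤ degIn G S v := by
    intro v hv
    have hcard : (S.erase v).card = s - 1 := by rw [Finset.card_erase_of_mem hv]
    have hnot : ¬ ((S.erase v).card + 1 ≤ edgesIn G (S.erase v)) := by
      intro hmem
      have := hSmin (S.erase v) (Finset.mem_filter.2 ⟨Finset.mem_univ _, hmem⟩)
      rw [hcard] at this
      omega
    have h2 := edgesIn_le_erase_add G S v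
    rw [hcard] at hnot
    omega
  -- pick the (at most one) positive vertex
  by_cases hupos : ∃ u ∈ S, 0 < x u
  · obtain ⟨u, huS, hupos⟩ := hupos
    -- degree upper bound
    have hub : degIn G S u ≤ 3 * t + 1 := by
      have hsum := sum_degIn_le G S
      have hsplit : ∑ v ∈ S, degIn G S v
          = degIn G S u + ∑ v ∈ S.erase u, degIn G S v :=
        (Finset.add_sum_erase S _ huS).symm
      have hlow : (S.erase u).card * (t + 1) ≤ ∑ v ∈ S.erase u, degIn G S v := by
        have := Finset.card_nsmul_le_sum (S.erase u) (degIn G S) (t + 1)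
          (fun v hv => hdeglb v (Finset.mem_of_mem_erase hv))
        simpa [smul_eq_mul] using this
      have hcard : (S.erase u).card = s - 1 := Finset.card_erase_of_mem huS
      rw [hcard] at hlow
      rw [hsplit] at hsum
      have key : degIn G S u + (s - 1) * (t + 1) ≤ 2 * (s + t) := by
        calc degIn G S u + (s - 1) * (t + 1)
            ≤ degIn G S u + ∑ v ∈ S.erase u, degIn G S v := Nat.add_le_add_left hlow _
          _ ≤ 2 * eS := hsum
          _ = 2 * (s + t) := by rw [het]
      zify [hs1] at key ⊢
      nlinarith [key, (by exact_mod_cast hs1 : (1:ℤ) ≤ (s:ℤ)),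
        (by exact_mod_cast ht1 : (1:ℤ) ≤ (t:ℤ))]
    have hzero : ∀ v ∈ S.erase u, ((degIn G S v : ℝ) - 1) * x v = 0 := by
      intro v hv
      rw [honez u v (Ne.symm (Finset.ne_of_mem_erase hv)) hupos, mul_zero]
    have hsumx : ∑ v ∈ S, ((degIn G S v : ℝ) - 1) * x v
        = ((degIn G S u : ℝ) - 1) * x u := by
      rw [← Finset.add_sum_erase S _ huS, Finset.sum_eq_zero hzero, add_zero]
    have hcons := hxS S
    rw [hsumx, ← hsdef, ← hedef] at hcons
    have hest : (eS : ℝ) - s = t := by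
      rw [het]; push_cast; ring
    rw [hest] at hcons
    -- now derive contradiction
    have hxu3 : x u < 1 / 3 := hlt u
    rcases Nat.lt_or_ge (degIn G S u) 2 with hd | hd
    · have : ((degIn G S u : ℝ) - 1) * x u ≤ 0 := by
        apply mul_nonpos_of_nonpos_of_nonneg
        · have : (degIn G S u : ℝ) ≤ 1 := by exact_mod_cast Nat.lt_succ_iff.mp hd
          linarith
        · exact hx0 u
      have htR : (1 : ℝ) ≤ t := by exact_mod_cast ht1
      linarith
    · have hdpos : (0 : ℝ) < (degIn G S u : ℝ) - 1 := by
        have : (2 : ℝ) ≤ (degIn G S u : ℝ) := by exact_mod_cast hd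
        linarith
      have h1 : ((degIn G S u : ℝ) - 1) * x u < ((degIn G S u : ℝ) - 1) * (1/3) :=
        mul_lt_mul_of_pos_left hxu3 hdpos
      have h2 : ((degIn G S u : ℝ) - 1) * (1/3) ≤ (t : ℝ) := by
        have : (degIn G S u : ℝ) ≤ 3 * t + 1 := by exact_mod_cast hub
        linarith
      linarith
  · push_neg at hupos
    have hzero : ∀ v ∈ S, ((degIn G S v : ℝ) - 1) * x v = 0 := by
      intro v hv
      have : x v = 0 := le_antisymm (hupos v hv) (hx0 v)
      rw [this, mul_zero]
    have hcons := hxS S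
    rw [Finset.sum_eq_zero hzero, ← hsdef, ← hedef] at hcons
    have : (eS : ℝ) ≤ s := by linarith
    have : (eS : ℝ) ≥ s + 1 := by exact_mod_cast hdense
    linarith

end FVS
end
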